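/- Let q be a power of 2, let m ≥ 2 be an even integer, and let f be a non-degenerate quadratic form on F_{q^m} over F_q of Type I. Then there exists an (m−1)-dimensional F_q-subspace W of F_{q^m} such that the restriction of f to W has rank m−1 (and hence is of Type III); consequently, for every a ∈ F_q with a ≠ 0, |{x ∈ W : f(x) = a}| = q^{m−2}. -/

import Mathlib

noncomputable def qfKer {K V : Type*} [Field K] [AddCommGroup V] [Module K V]
    (f : QuadraticForm K V) : Submodule K V where
  carrier := {x | ∀ y, f (x + y) = f y}
  zero_mem' := by intro y; rw [zero_add]
  add_mem' := by
    intro a b ha hb y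
    rw [add_assoc, ha, hb]
  smul_mem' := by
    intro c x hx y
    have h0 : f x = 0 := by simpa using hx 0
    have hp : ∀ z, QuadraticMap.polar (⇑f) x z = 0 := by
      intro z
      simp [QuadraticMap.polar, hx z, h0]
    have h1 : f (c • x) = 0 := by
      rw [QuadraticMap.map_smul, h0]
      simp
    have hps : QuadraticMap.polar (⇑f) (c • x) y = 0 := by
      rw [QuadraticMap.polar_smul_left, hp y, smul_zero]
    have h2 : f (c • x + y) - f (c • x) - f y = 0 := hps
    show f (c • x + y) = f y
    linear_combination h2 + h1

/-- Extend a coordinate vector `c : Fin d → K` by zero to all of `ℕ`. -/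
def extc {K : Type*} [Zero K] {d : ℕ} (c : Fin d → K) (i : ℕ) : K :=
  if h : i < d then c ⟨i, h⟩ else 0

/-- A quadratic form of rank `t` on a `d`-dimensional space is of Type I if in some basis it is
`x₁x₂ + x₃x₄ + ⋯ + x_{t−1}x_t` (`t` even). -/
def IsTypeI (K V : Type*) [Field K] [AddCommGroup V] [Module K V] (d t : ℕ)
    (f : QuadraticForm K V) : Prop :=
  ∃ b : Module.Basis (Fin d) K V, ∀ c : Fin d → K,
    f (∑ i, c i • b i) =
      ∑ j ∈ Finset.range (t / 2), extc c (2 * j) * extc c (2 * j + 1)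

/-- A quadratic form of rank `t` on a `d`-dimensional space is of Type III if in some basis it is
`x₁x₂ + ⋯ + x_{t−2}x_{t−1} + x_t²` (`t` odd). -/
def IsTypeIII (K V : Type*) [Field K] [AddCommGroup V] [Module K V] (d t : ℕ)
    (f : QuadraticForm K V) : Prop :=
  ∃ b : Module.Basis (Fin d) K V, ∀ c : Fin d → K,
    f (∑ i, c i • b i) =
      (∑ j ∈ Finset.range (t / 2), extc c (2 * j) * extc c (2 * j + 1))
        + extc c (t - 1) ^ 2

section Helpers

variable {K : Type*} [Field K]

lemma extc_lt {d : ℕ} (c : Fin d → K) {n : ℕ} (h : n < d) : extc c n = c ⟨n, h⟩ := dif_pos h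

lemma extc_fin {d : ℕ} (c : Fin d → K) (i : Fin d) : extc c (i : ℕ) = c i := by
  rw [extc_lt c i.isLt]

lemma extc_add {d : ℕ} (c d' : Fin d → K) (n : ℕ) :
    extc (c + d') n = extc c n + extc d' n := by
  unfold extc; split <;> simp

lemma extc_single {d : ℕ} (i0 : Fin d) (n : ℕ) :
    extc (Pi.single i0 (1 : K)) n = if n = (i0 : ℕ) then 1 else 0 := by
  unfold extc
  split
  · next h =>
    rw [Pi.single_apply]
    congr 1
    simp [Fin.ext_iff]
  · next h =>
    rw [if_neg]
    have := i0.isLt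
    omega

lemma extc_snoc_lt {N : ℕ} (c : Fin N → K) (v : K) {n : ℕ} (h : n < N) :
    extc (Fin.snoc c v) n = extc c n := by
  rw [extc_lt _ (Nat.lt_succ_of_lt h), extc_lt c h]
  have : (⟨n, Nat.lt_succ_of_lt h⟩ : Fin (N + 1)) = Fin.castSucc ⟨n, h⟩ := rfl
  rw [this, Fin.snoc_castSucc]

lemma extc_snoc_last {N : ℕ} (c : Fin N → K) (v : K) :
    extc (Fin.snoc c v) N = v := by
  rw [extc_lt _ (Nat.lt_succ_self N)]
  have : (⟨N, Nat.lt_succ_self N⟩ : Fin (N + 1)) = Fin.last N := rfl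
  rw [this, Fin.snoc_last]

def Q0 (s : ℕ) (u : Fin (2 * s) → K) : K :=
  ∑ j ∈ Finset.range s, extc u (2 * j) * extc u (2 * j + 1)

def Ffun (s : ℕ) (c : Fin (2 * s + 1) → K) : K :=
  (∑ j ∈ Finset.range s, extc c (2 * j) * extc c (2 * j + 1)) + extc c (2 * s) ^ 2

def Bfun (s : ℕ) (c d : Fin (2 * s + 1) → K) : K :=
  ∑ j ∈ Finset.range s, (extc c (2 * j) * extc d (2 * j + 1) + extc c (2 * j + 1) * extc d (2 * j))

lemma Ffun_snoc (s : ℕ) (u : Fin (2 * s) → K) (v : K) :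
    Ffun s (Fin.snoc u v) = Q0 s u + v ^ 2 := by
  unfold Ffun Q0
  congr 1
  · refine Finset.sum_congr rfl fun j hj => ?_
    have hj' := Finset.mem_range.mp hj
    rw [extc_snoc_lt u v (by omega), extc_snoc_lt u v (by omega)]
  · rw [extc_snoc_last]

lemma Ffun_eq_init (s : ℕ) (c : Fin (2 * s + 1) → K) :
    Ffun s c = Q0 s (Fin.init c) + (c (Fin.last (2 * s))) ^ 2 := by
  conv_lhs => rw [← Fin.snoc_init_self c]
  rw [Ffun_snoc]

lemma polarF (s : ℕ) (h2 : (2 : K) = 0) (c d : Fin (2 * s + 1) → K) :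
    Ffun s (c + d) = Ffun s c + Ffun s d + Bfun s c d := by
  unfold Ffun Bfun
  simp only [extc_add]
  have h1 : ∑ j ∈ Finset.range s,
      (extc c (2 * j) + extc d (2 * j)) * (extc c (2 * j + 1) + extc d (2 * j + 1))
      = (∑ j ∈ Finset.range s, extc c (2 * j) * extc c (2 * j + 1))
        + (∑ j ∈ Finset.range s, extc d (2 * j) * extc d (2 * j + 1))
        + ∑ j ∈ Finset.range s,
            (extc c (2 * j) * extc d (2 * j + 1) + extc c (2 * j + 1) * extc d (2 * j)) := by
    rw [← Finset.sum_add_distrib, ← Finset.sum_add_distrib]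
    exact Finset.sum_congr rfl fun j _ => by ring
  rw [h1]
  linear_combination (extc c (2 * s)) * (extc d (2 * s)) * h2

lemma Bfun_single_even (s : ℕ) (c : Fin (2 * s + 1) → K) (j0 : ℕ) (hj : j0 < s) :
    Bfun s c (Pi.single ⟨2 * j0, by omega⟩ (1 : K)) = extc c (2 * j0 + 1) := by
  unfold Bfun
  have hstep : ∀ j ∈ Finset.range s,
      extc c (2 * j) * extc (Pi.single (⟨2 * j0, by omega⟩ : Fin (2*s+1)) (1:K)) (2 * j + 1)
      + extc c (2 * j + 1) * extc (Pi.single (⟨2 * j0, by omega⟩ : Fin (2*s+1)) (1:K)) (2 * j)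
      = if j = j0 then extc c (2 * j + 1) else 0 := by
    intro j hj'
    rw [extc_single, extc_single]
    simp only []
    rw [if_neg (by omega : ¬ (2 * j + 1 = 2 * j0))]
    by_cases h : j = j0
    · subst h; rw [if_pos rfl, if_pos rfl]; ring
    · rw [if_neg (by omega : ¬ (2 * j = 2 * j0)), if_neg h]; ring
  rw [Finset.sum_congr rfl hstep, Finset.sum_ite_eq' (Finset.range s) j0,
    if_pos (Finset.mem_range.mpr hj)]

lemma Bfun_single_odd (s : ℕ) (c : Fin (2 * s + 1) → K) (j0 : ℕ) (hj : j0 < s) :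
    Bfun s c (Pi.single ⟨2 * j0 + 1, by omega⟩ (1 : K)) = extc c (2 * j0) := by
  unfold Bfun
  have hstep : ∀ j ∈ Finset.range s,
      extc c (2 * j) * extc (Pi.single (⟨2 * j0 + 1, by omega⟩ : Fin (2*s+1)) (1:K)) (2 * j + 1)
      + extc c (2 * j + 1) * extc (Pi.single (⟨2 * j0 + 1, by omega⟩ : Fin (2*s+1)) (1:K)) (2 * j)
      = if j = j0 then extc c (2 * j) else 0 := by
    intro j hj'
    rw [extc_single, extc_single]
    simp only []
    rw [if_neg (by omega : ¬ (2 * j = 2 * j0 + 1))]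
    by_cases h : j = j0
    · subst h; rw [if_pos rfl, if_pos rfl]; ring
    · rw [if_neg (by omega : ¬ (2 * j + 1 = 2 * j0 + 1)), if_neg h]; ring
  rw [Finset.sum_congr rfl hstep, Finset.sum_ite_eq' (Finset.range s) j0,
    if_pos (Finset.mem_range.mpr hj)]

/-- The hyperplane basis vectors: `w i = b i` for `i < 2s`, `w (2s) = b (2s) + b (2s+1)`. -/
def wfun {L : Type*} [AddCommGroup L] (s : ℕ) (b : Fin (2 * s + 2) → L) (i : Fin (2 * s + 1)) :
    L :=
  b i.castSucc + if i = Fin.last (2 * s) then b (Fin.last (2 * s + 1)) else 0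

lemma sum_snoc_smul {L : Type*} [AddCommGroup L] [Module K L] (s : ℕ)
    (c : Fin (2 * s + 1) → K) (b : Fin (2 * s + 2) → L) :
    ∑ i : Fin (2 * s + 2), (Fin.snoc c (c (Fin.last (2 * s))) : Fin (2 * s + 2) → K) i • b i
      = ∑ i, c i • wfun s b i := by
  rw [Fin.sum_univ_castSucc]
  simp only [Fin.snoc_castSucc, Fin.snoc_last]
  unfold wfun
  rw [Finset.sum_congr rfl
    (fun i (_ : i ∈ Finset.univ) => smul_add (c i) (b i.castSucc)
      (if i = Fin.last (2 * s) then b (Fin.last (2 * s + 1)) else 0)),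
    Finset.sum_add_distrib]
  congr 1
  have : ∀ i : Fin (2 * s + 1),
      (c i • if i = Fin.last (2 * s) then b (Fin.last (2 * s + 1)) else 0)
      = if i = Fin.last (2 * s) then c i • b (Fin.last (2 * s + 1)) else 0 := by
    intro i; split <;> simp
  rw [Finset.sum_congr rfl (fun i _ => this i), Finset.sum_ite_eq' Finset.univ (Fin.last (2*s)),
    if_pos (Finset.mem_univ _)]

lemma typeI_sum (s : ℕ) (c : Fin (2 * s + 1) → K) :
    ∑ j ∈ Finset.range (s + 1),
        extc (Fin.snoc c (c (Fin.last (2 * s))) : Fin (2 * s + 2) → K) (2 * j)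
          * extc (Fin.snoc c (c (Fin.last (2 * s))) : Fin (2 * s + 2) → K) (2 * j + 1)
      = Ffun s c := by
  rw [Finset.sum_range_succ]
  unfold Ffun
  congr 1
  · refine Finset.sum_congr rfl fun j hj => ?_
    have hj' := Finset.mem_range.mp hj
    rw [extc_snoc_lt _ _ (by omega : 2 * j < 2 * s + 1),
      extc_snoc_lt _ _ (by omega : 2 * j + 1 < 2 * s + 1)]
  · have hlast : extc (Fin.snoc c (c (Fin.last (2 * s))) : Fin (2 * s + 2) → K) (2 * s + 1)
        = c (Fin.last (2 * s)) := extc_snoc_last c (c (Fin.last (2 * s)))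
    rw [extc_snoc_lt _ _ (by omega : 2 * s < 2 * s + 1), hlast]
    rw [extc_lt c (by omega : 2 * s < 2 * s + 1)]
    have : (⟨2 * s, by omega⟩ : Fin (2 * s + 1)) = Fin.last (2 * s) := rfl
    rw [this]
    ring

end Helpers

/-- For a non-degenerate Type I form `f` on `F_{q^m}` (`m ≥ 2` even), there is an
`(m−1)`-dimensional subspace on which `f` restricts to a form of rank `m−1` (hence Type III);
on it the equation `f(x) = a` (`a ≠ 0`) has `q^(m−2)` solutions. -/
theorem exists_hyperplane_typeIII_restriction (q m : ℕ) (hq : ∃ e : ℕ, 0 < e ∧ q = 2 ^ e) (hm : 2 ≤ m) (hme : Even m)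
    (K L : Type) [Field K] [Fintype K] [Field L] [Fintype L] [Algebra K L]
    (hcard : Fintype.card K = q) (hcardL : Fintype.card L = q ^ m)
    (hrank : Module.finrank K L = m)
    (f : QuadraticForm K L)
    (hnd : ∀ x : L, (∀ y, f (x + y) = f y) → x = 0)
    (hI : IsTypeI K L m m f) :
    ∃ W : Submodule K L, Module.finrank K ↥W = m - 1 ∧
      Module.finrank K ↥W - Module.finrank K ↥(qfKer (f.comp W.subtype)) = m - 1 ∧
      IsTypeIII K ↥W (Module.finrank K ↥W) (m - 1) (f.comp W.subtype) ∧
      ∀ a : K, a ≠ 0 →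
        Set.ncard {x : L | x ∈ W ∧ f x = a} = q ^ (m - 2) := by
  obtain ⟨e, he, rfl⟩ := hq
  have hm2 : m % 2 = 0 := Nat.even_iff.mp hme
  obtain ⟨s, rfl⟩ : ∃ s, m = 2 * s + 2 := ⟨m / 2 - 1, by omega⟩
  have h2 : (2 : K) = 0 := by
    have hc := FiniteField.cast_card_eq_zero K
    rw [hcard] at hc
    push_cast at hc
    exact pow_eq_zero_iff (by omega : e ≠ 0) |>.mp hc
  obtain ⟨b, hb⟩ := hI
  rw [(by omega : (2 * s + 2) / 2 = s + 1)] at hb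
  set w : Fin (2 * s + 1) → L := wfun s (fun i => b i) with hw_def
  have hA : ∀ c : Fin (2 * s + 1) → K,
      (∑ i : Fin (2 * s + 2), (Fin.snoc c (c (Fin.last (2 * s))) : Fin (2 * s + 2) → K) i • b i)
        = ∑ i, c i • w i := fun c => sum_snoc_smul s c fun i => b i
  have hF : ∀ c : Fin (2 * s + 1) → K, f (∑ i, c i • w i) = Ffun s c := by
    intro c
    rw [← hA, hb, typeI_sum]
  have hw : LinearIndependent K w := by
    rw [Fintype.linearIndependent_iff]
    intro g hg i
    have hsum : ∑ i : Fin (2 * s + 2),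
        (Fin.snoc g (g (Fin.last (2 * s))) : Fin (2 * s + 2) → K) i • b i = 0 := by
      rw [hA]; exact hg
    have hz := Fintype.linearIndependent_iff.mp b.linearIndependent _ hsum
    have := hz i.castSucc
    rwa [Fin.snoc_castSucc] at this
  set W := Submodule.span K (Set.range w) with hW_def
  have hfr : Module.finrank K ↥W = 2 * s + 1 := by
    rw [hW_def, finrank_span_eq_card hw, Fintype.card_fin]
  have hmem : ∀ c : Fin (2 * s + 1) → K, (∑ i, c i • w i) ∈ W := fun c =>
    Submodule.sum_mem _ fun i _ => Submodule.smul_mem _ _ (Submodule.subset_span ⟨i, rfl⟩)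
  set bw : Module.Basis (Fin (2 * s + 1)) K ↥W := Module.Basis.span hw with hbw_def
  have hcoe : ∀ c : Fin (2 * s + 1) → K, ((∑ i, c i • bw i : W) : L) = ∑ i, c i • w i := by
    intro c
    push_cast
    exact Finset.sum_congr rfl fun i _ => by rw [Module.Basis.span_apply]
  have hIII : IsTypeIII K ↥W (2 * s + 1) (2 * s + 1) (f.comp W.subtype) := by
    refine ⟨bw, fun c => ?_⟩
    rw [(by omega : (2 * s + 1) / 2 = s), (by omega : 2 * s + 1 - 1 = 2 * s)]
    show f ((∑ i, c i • bw i : W) : L) = _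
    rw [hcoe, hF]
    rfl
  have hker : qfKer (f.comp W.subtype) = ⊥ := by
    rw [Submodule.eq_bot_iff]
    intro x hx
    have hx' : ∀ y : W, f ((x : L) + (y : L)) = f (y : L) := fun y => hx y
    set c : Fin (2 * s + 1) → K := fun i => bw.repr x i with hc_def
    have hxc : (x : L) = ∑ i, c i • w i := by
      conv_lhs => rw [← bw.sum_repr x]
      exact hcoe c
    have hFc : Ffun s c = 0 := by
      have h0 := hx' 0
      rw [Submodule.coe_zero, add_zero, QuadraticMap.map_zero] at h0
      rw [← hF c, ← hxc]; exact h0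
    have hB : ∀ i0 : Fin (2 * s + 1), Bfun s c (Pi.single i0 1) = 0 := by
      intro i0
      have hy := hx' (bw i0)
      rw [Module.Basis.span_apply] at hy
      change f ((x : L) + w i0) = f (w i0) at hy
      have hsingle : ∑ i, (Pi.single i0 (1 : K) : Fin (2 * s + 1) → K) i • w i = w i0 := by
        simp [Pi.single_apply, ite_smul]
      have hxw : (x : L) + w i0 = ∑ i, (c + Pi.single i0 1 : Fin (2 * s + 1) → K) i • w i := by
        have hsplit : ∑ i, (c + Pi.single i0 1 : Fin (2 * s + 1) → K) i • w i
            = (∑ i, c i • w i) + ∑ i, (Pi.single i0 (1 : K) : Fin (2 * s + 1) → K) i • w i := by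
          rw [← Finset.sum_add_distrib]
          exact Finset.sum_congr rfl fun i _ => by rw [Pi.add_apply, add_smul]
        rw [hsplit, hsingle, ← hxc]
      rw [hxw, hF] at hy
      conv_rhs at hy => rw [← hsingle, hF]
      rw [polarF s h2 c (Pi.single i0 1), hFc] at hy
      linear_combination hy
    have hceven : ∀ j0 < s, extc c (2 * j0) = 0 ∧ extc c (2 * j0 + 1) = 0 := by
      intro j0 hj
      constructor
      · have := hB ⟨2 * j0 + 1, by omega⟩
        rwa [Bfun_single_odd s c j0 hj] at this
      · have := hB ⟨2 * j0, by omega⟩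
        rwa [Bfun_single_even s c j0 hj] at this
    have hclast : extc c (2 * s) = 0 := by
      have hFc' : Ffun s c = extc c (2 * s) ^ 2 := by
        unfold Ffun
        rw [Finset.sum_eq_zero, zero_add]
        intro j hj
        rw [(hceven j (Finset.mem_range.mp hj)).1, zero_mul]
      rw [hFc] at hFc'
      exact pow_eq_zero_iff (by omega : 2 ≠ 0) |>.mp hFc'.symm
    have hc0 : ∀ i, c i = 0 := by
      intro i
      rw [← extc_fin c i]
      rcases lt_or_ge (i : ℕ) (2 * s) with h | h
      · rcases Nat.even_or_odd (i : ℕ) with ⟨t, ht⟩ | ⟨t, ht⟩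
        · rw [(by omega : (i : ℕ) = 2 * t)]
          exact (hceven t (by omega)).1
        · rw [(by omega : (i : ℕ) = 2 * t + 1)]
          exact (hceven t (by omega)).2
      · have hi := i.isLt
        rw [(by omega : (i : ℕ) = 2 * s)]
        exact hclast
    have hx0 : (x : L) = 0 := by
      rw [hxc]
      exact Finset.sum_eq_zero fun i _ => by rw [hc0 i, zero_smul]
    exact Subtype.ext hx0
  refine ⟨W, ?_, ?_, ?_, ?_⟩
  · rw [hfr]; omega
  · rw [hfr, hker, finrank_bot]; omega
  · rw [hfr, (by omega : 2 * s + 2 - 1 = 2 * s + 1)]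
    exact hIII
  · intro a _
    rw [(by omega : 2 * s + 2 - 2 = 2 * s)]
    have hΦinj : Function.Injective (fun c : Fin (2 * s + 1) → K => ∑ i, c i • w i) := by
      intro c c' hcc
      simp only [] at hcc
      have hsub : ∑ i, (c - c') i • w i = 0 := by
        rw [Finset.sum_congr rfl (fun i (_ : i ∈ Finset.univ) => by rw [Pi.sub_apply, sub_smul]),
          Finset.sum_sub_distrib, hcc, sub_self]
      have hz := Fintype.linearIndependent_iff.mp hw _ hsub
      funext i
      have := hz i
      rw [Pi.sub_apply] at this
      exact sub_eq_zero.mp this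
    have himg : {x : L | x ∈ W ∧ f x = a}
        = (fun c : Fin (2 * s + 1) → K => ∑ i, c i • w i) '' {c | Ffun s c = a} := by
      ext x
      constructor
      · rintro ⟨hxW, hxf⟩
        rw [hW_def] at hxW
        obtain ⟨c, rfl⟩ := (Submodule.mem_span_range_iff_exists_fun K).mp hxW
        exact ⟨c, by rw [Set.mem_setOf_eq, ← hF c]; exact hxf, rfl⟩
      · rintro ⟨c, hc, rfl⟩
        exact ⟨hmem c, (hF c).trans hc⟩
    rw [himg, Set.ncard_image_of_injective _ hΦinj]
    have hsq_inj : Function.Injective (fun x : K => x ^ 2) := by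
      intro x y hxy
      simp only [] at hxy
      have hz : (x - y) ^ 2 = 0 := by
        linear_combination hxy + (y ^ 2 - x * y) * h2
      have := pow_eq_zero_iff (by omega : 2 ≠ 0) |>.mp hz
      exact sub_eq_zero.mp this
    have hsq_bij : Function.Bijective (fun x : K => x ^ 2) :=
      Finite.injective_iff_bijective.mp hsq_inj
    let σ : K ≃ K := Equiv.ofBijective _ hsq_bij
    have hσ : ∀ z : K, (σ.symm z) ^ 2 = z := fun z => σ.apply_symm_apply z
    have hσ' : ∀ x : K, σ.symm (x ^ 2) = x := fun x => σ.symm_apply_apply x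
    let E : {c : Fin (2 * s + 1) → K | Ffun s c = a} ≃ (Fin (2 * s) → K) :=
      { toFun := fun c => Fin.init c.1
        invFun := fun u => ⟨Fin.snoc u (σ.symm (a - Q0 s u)), by
          show Ffun s _ = a
          rw [Ffun_snoc, hσ]; ring⟩
        left_inv := by
          intro c
          apply Subtype.ext
          simp only []
          have hc : Ffun s (c : Fin (2 * s + 1) → K) = a := c.2
          rw [Ffun_eq_init] at hc
          have hsub : a - Q0 s (Fin.init c.1) = (c.1 (Fin.last (2 * s))) ^ 2 := by
            linear_combination (-1 : K) * hc
          rw [hsub, hσ', Fin.snoc_init_self]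
        right_inv := by
          intro u
          simp only []
          rw [Fin.init_snoc] }
    rw [← Nat.card_coe_set_eq, Nat.card_congr E, Nat.card_eq_fintype_card,
      Fintype.card_fun, hcard, Fintype.card_fin]
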